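/- The function Γ(z) = d(z)^{2−N_γ} is Grushin-harmonic away from the origin: for z = (x,y) with x ≠ 0 and z ≠ 0, one has Δ_γ Γ(z) = Δ_x Γ(z) + |x|^{2γ} Δ_y Γ(z) = 0, provided N_γ ≠ 2. -/

import Mathlib

/-- The Euclidean Laplacian of `f : ℝⁿ → ℝ` at `x`, as the sum of the second
derivatives along the coordinate directions. -/
noncomputable def lapE {n : ℕ} (f : EuclideanSpace ℝ (Fin n) → ℝ)
    (x : EuclideanSpace ℝ (Fin n)) : ℝ :=
  ∑ i : Fin n, fderiv ℝ (fun y => fderiv ℝ f y (EuclideanSpace.single i (1 : ℝ))) x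
    (EuclideanSpace.single i (1 : ℝ))

lemma hasFDerivAt_normSq {n : ℕ} (x : EuclideanSpace ℝ (Fin n)) :
    HasFDerivAt (fun x' : EuclideanSpace ℝ (Fin n) => ‖x'‖ ^ 2) (2 • (innerSL ℝ x)) x :=
  (hasStrictFDerivAt_norm_sq x).hasFDerivAt

lemma lapE_radial {n : ℕ} {φ φ₁ φ₂ : ℝ → ℝ} {U : Set ℝ} (hU : IsOpen U)
    (hφ : ∀ s ∈ U, HasDerivAt φ (φ₁ s) s) (hφ₁ : ∀ s ∈ U, HasDerivAt φ₁ (φ₂ s) s)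
    (x : EuclideanSpace ℝ (Fin n)) (hmem : ‖x‖ ^ 2 ∈ U) :
    lapE (fun x' => φ (‖x'‖ ^ 2)) x
      = 4 * ‖x‖ ^ 2 * φ₂ (‖x‖ ^ 2) + 2 * n * φ₁ (‖x‖ ^ 2) := by
  set V : Set (EuclideanSpace ℝ (Fin n)) := (fun x' => ‖x'‖ ^ 2) ⁻¹' U with hV
  have hVopen : IsOpen V := hU.preimage (by fun_prop)
  have hxV : x ∈ V := hmem
  have hD1 : ∀ x' ∈ V, HasFDerivAt (fun z => φ (‖z‖ ^ 2))
      (φ₁ (‖x'‖ ^ 2) • (2 • (innerSL ℝ x'))) x' := fun x' hx' =>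
    (hφ _ hx').comp_hasFDerivAt x' (hasFDerivAt_normSq x')
  have key : ∀ i : Fin n,
      fderiv ℝ (fun z => fderiv ℝ (fun w => φ (‖w‖ ^ 2)) z (EuclideanSpace.single i (1 : ℝ))) x
        (EuclideanSpace.single i (1 : ℝ))
      = 4 * (x i) ^ 2 * φ₂ (‖x‖ ^ 2) + 2 * φ₁ (‖x‖ ^ 2) := by
    intro i
    have heq : (fun z => fderiv ℝ (fun w => φ (‖w‖ ^ 2)) z (EuclideanSpace.single i (1 : ℝ)))
        =ᶠ[nhds x] (fun z => φ₁ (‖z‖ ^ 2) * (2 * z i)) := by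
      filter_upwards [hVopen.mem_nhds hxV] with z hzV
      rw [(hD1 z hzV).fderiv]
      simp [EuclideanSpace.inner_single_right, real_inner_comm, mul_comm]
    rw [heq.fderiv_eq]
    have h1 : HasFDerivAt (fun z : EuclideanSpace ℝ (Fin n) => φ₁ (‖z‖ ^ 2))
        (φ₂ (‖x‖ ^ 2) • (2 • (innerSL ℝ x))) x :=
      (hφ₁ _ hmem).comp_hasFDerivAt x (hasFDerivAt_normSq x)
    have h2 : HasFDerivAt (fun z : EuclideanSpace ℝ (Fin n) => 2 * z i)
        ((2 : ℝ) • (EuclideanSpace.proj (𝕜 := ℝ) i)) x := by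
      exact ((EuclideanSpace.proj (𝕜 := ℝ) i).hasFDerivAt (x := x)).const_smul (2 : ℝ)
    have : HasFDerivAt (fun z : EuclideanSpace ℝ (Fin n) => φ₁ (‖z‖ ^ 2) * (2 * z i)) _ x :=
      h1.mul h2
    rw [this.fderiv]
    simp [EuclideanSpace.inner_single_right, real_inner_comm, EuclideanSpace.proj,
      EuclideanSpace.single_apply]
    ring
  have hsum : ∑ i : Fin n, (x i) ^ 2 = ‖x‖ ^ 2 := by
    rw [PiLp.norm_sq_eq_of_L2]
    simp [Real.norm_eq_abs, sq_abs]
  unfold lapE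
  rw [Finset.sum_congr rfl (fun i _ => key i)]
  rw [Finset.sum_add_distrib]
  simp only [← Finset.sum_mul]
  rw [show (∑ i : Fin n, 4 * x i ^ 2) = 4 * ‖x‖ ^ 2 by rw [← Finset.mul_sum, hsum]]
  rw [Finset.sum_const, Finset.card_univ, Fintype.card_fin, nsmul_eq_mul]
  ring

/-- `Γ = d^{2-N_γ}` is Grushin-harmonic away from the origin (for `N_γ ≠ 2`), where
`d(x,y) = (|x|^{2(γ+1)} + (γ+1)²|y|²)^{1/(2(γ+1))}` and `N_γ = m + (1+γ)ℓ`. -/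
theorem grushin_fundamental_harmonic (m l : ℕ) (hm : 1 ≤ m) (hl : 1 ≤ l) (γ : ℝ) (hγ : 0 ≤ γ)
    (hN : (m : ℝ) + (1 + γ) * l ≠ 2)
    (x : EuclideanSpace ℝ (Fin m)) (y : EuclideanSpace ℝ (Fin l))
    (hx : x ≠ 0) (hz : (x, y) ≠ 0) :
    lapE (fun x' => ((‖x'‖ ^ (2 * (γ + 1)) + (γ + 1) ^ 2 * ‖y‖ ^ 2) ^ (1 / (2 * (γ + 1))))
        ^ (2 - ((m : ℝ) + (1 + γ) * l))) x
      + ‖x‖ ^ (2 * γ) *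
        lapE (fun y' => ((‖x‖ ^ (2 * (γ + 1)) + (γ + 1) ^ 2 * ‖y'‖ ^ 2) ^ (1 / (2 * (γ + 1))))
          ^ (2 - ((m : ℝ) + (1 + γ) * l))) y
    = 0 := by
  have hγ1 : (0:ℝ) < γ + 1 := by linarith
  set N : ℝ := (m : ℝ) + (1 + γ) * l with hNdef
  set β : ℝ := (2 - N) / (2 * (γ + 1)) with hβdef
  set k : ℝ := (γ + 1) ^ 2 with hkdef
  set T : ℝ := ‖y‖ ^ 2 with hT
  set S : ℝ := ‖x‖ ^ 2 with hS
  have hSpos : 0 < S := by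
    have : 0 < ‖x‖ := norm_pos_iff.mpr hx
    positivity
  have hTnn : 0 ≤ T := by positivity
  have hknn : (0:ℝ) < k := by positivity
  -- rewriting of rpow expressions
  have hpow2 : ∀ r : ℝ, 0 ≤ r → r ^ (2 * (γ + 1)) = (r ^ 2 : ℝ) ^ (γ + 1) := by
    intro r hr
    rw [← Real.rpow_natCast r 2, ← Real.rpow_mul hr]
    norm_num
  -- the radial profiles
  set φ : ℝ → ℝ := fun s => (s ^ (γ + 1) + k * T) ^ β with hφdef
  set φ₁ : ℝ → ℝ := fun s => β * (γ + 1) * (s ^ γ * (s ^ (γ + 1) + k * T) ^ (β - 1)) with hφ₁def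
  set φ₂ : ℝ → ℝ := fun s => β * (γ + 1) *
      (γ * s ^ (γ - 1) * (s ^ (γ + 1) + k * T) ^ (β - 1)
        + s ^ γ * ((β - 1) * (s ^ (γ + 1) + k * T) ^ (β - 2) * ((γ + 1) * s ^ γ))) with hφ₂def
  have hA : ∀ s : ℝ, 0 < s → 0 < s ^ (γ + 1) + k * T := by
    intro s hs
    have := Real.rpow_pos_of_pos hs (γ + 1)
    positivity
  have hφ : ∀ s ∈ Set.Ioi (0:ℝ), HasDerivAt φ (φ₁ s) s := by
    intro s hs
    have hs' : 0 < s := hs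
    have hinner : HasDerivAt (fun s : ℝ => s ^ (γ + 1) + k * T) ((γ + 1) * s ^ γ) s := by
      simpa [show γ + 1 - 1 = γ by ring] using
        (Real.hasDerivAt_rpow_const (p := γ + 1) (Or.inl hs'.ne')).add_const (k * T)
    have houter : HasDerivAt (fun a : ℝ => a ^ β)
        (β * (s ^ (γ + 1) + k * T) ^ (β - 1)) (s ^ (γ + 1) + k * T) :=
      Real.hasDerivAt_rpow_const (Or.inl (hA s hs').ne')
    have := houter.comp s hinner
    refine this.congr_deriv ?_
    simp only [hφ₁def]
    ring
  have hφ₁ : ∀ s ∈ Set.Ioi (0:ℝ), HasDerivAt φ₁ (φ₂ s) s := by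
    intro s hs
    have hs' : 0 < s := hs
    have hinner : HasDerivAt (fun s : ℝ => s ^ (γ + 1) + k * T) ((γ + 1) * s ^ γ) s := by
      simpa [show γ + 1 - 1 = γ by ring] using
        (Real.hasDerivAt_rpow_const (p := γ + 1) (Or.inl hs'.ne')).add_const (k * T)
    have ha : HasDerivAt (fun s : ℝ => s ^ γ) (γ * s ^ (γ - 1)) s :=
      Real.hasDerivAt_rpow_const (Or.inl hs'.ne')
    have hb : HasDerivAt (fun s : ℝ => (s ^ (γ + 1) + k * T) ^ (β - 1))
        ((β - 1) * (s ^ (γ + 1) + k * T) ^ (β - 2) * ((γ + 1) * s ^ γ)) s := by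
      have houter : HasDerivAt (fun a : ℝ => a ^ (β - 1))
          ((β - 1) * (s ^ (γ + 1) + k * T) ^ (β - 1 - 1)) (s ^ (γ + 1) + k * T) :=
        Real.hasDerivAt_rpow_const (Or.inl (hA s hs').ne')
      have := houter.comp s hinner
      rw [show β - 1 - 1 = β - 2 by ring] at this
      exact this
    exact (ha.mul hb).const_mul (β * (γ + 1))
  -- y-direction profile
  set b : ℝ := ‖x‖ ^ (2 * (γ + 1)) with hbdef
  have hbS : b = S ^ (γ + 1) := hpow2 ‖x‖ (norm_nonneg x)
  have hbpos : 0 < b := by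
    rw [hbS]; exact Real.rpow_pos_of_pos hSpos _
  set ψ : ℝ → ℝ := fun t => (b + k * t) ^ β with hψdef
  set ψ₁ : ℝ → ℝ := fun t => β * k * (b + k * t) ^ (β - 1) with hψ₁def
  set ψ₂ : ℝ → ℝ := fun t => β * k * ((β - 1) * (b + k * t) ^ (β - 2) * k) with hψ₂def
  set Uy : Set ℝ := (fun t : ℝ => b + k * t) ⁻¹' Set.Ioi 0 with hUydef
  have hUyopen : IsOpen Uy := isOpen_Ioi.preimage (by fun_prop)
  have hTmem : T ∈ Uy := by
    simp only [hUydef, Set.mem_preimage, Set.mem_Ioi]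
    positivity
  have hinnery : ∀ t : ℝ, HasDerivAt (fun t : ℝ => b + k * t) k t := by
    intro t
    simpa using ((hasDerivAt_id t).const_mul k).const_add b
  have hψ : ∀ t ∈ Uy, HasDerivAt ψ (ψ₁ t) t := by
    intro t ht
    have htpos : 0 < b + k * t := ht
    have houter : HasDerivAt (fun a : ℝ => a ^ β)
        (β * (b + k * t) ^ (β - 1)) (b + k * t) :=
      Real.hasDerivAt_rpow_const (Or.inl htpos.ne')
    have := houter.comp t (hinnery t)
    refine this.congr_deriv ?_
    simp only [hψ₁def]
    ring
  have hψ₁ : ∀ t ∈ Uy, HasDerivAt ψ₁ (ψ₂ t) t := by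
    intro t ht
    have htpos : 0 < b + k * t := ht
    have houter : HasDerivAt (fun a : ℝ => a ^ (β - 1))
        ((β - 1) * (b + k * t) ^ (β - 1 - 1)) (b + k * t) :=
      Real.hasDerivAt_rpow_const (Or.inl htpos.ne')
    have h := (houter.comp t (hinnery t)).const_mul (β * k)
    rw [show β - 1 - 1 = β - 2 by ring] at h
    exact h
  -- identify the two functions in the statement with radial profiles
  have hfx : (fun x' : EuclideanSpace ℝ (Fin m) =>
      ((‖x'‖ ^ (2 * (γ + 1)) + (γ + 1) ^ 2 * ‖y‖ ^ 2) ^ (1 / (2 * (γ + 1))))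
        ^ (2 - ((m : ℝ) + (1 + γ) * l))) = fun x' => φ (‖x'‖ ^ 2) := by
    funext x'
    have h1 := hpow2 ‖x'‖ (norm_nonneg x')
    have hA' : 0 ≤ (‖x'‖ ^ 2 : ℝ) ^ (γ + 1) + k * T := by positivity
    simp only [hφdef, h1, ← hkdef, ← hT, ← hNdef]
    rw [← Real.rpow_mul hA']
    congr 1
    rw [hβdef]; field_simp
  have hfy : (fun y' : EuclideanSpace ℝ (Fin l) =>
      ((‖x‖ ^ (2 * (γ + 1)) + (γ + 1) ^ 2 * ‖y'‖ ^ 2) ^ (1 / (2 * (γ + 1))))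
        ^ (2 - ((m : ℝ) + (1 + γ) * l))) = fun y' => ψ (‖y'‖ ^ 2) := by
    funext y'
    have hA' : 0 ≤ b + k * ‖y'‖ ^ 2 := by positivity
    simp only [hψdef, ← hkdef, ← hbdef, ← hNdef]
    rw [← Real.rpow_mul hA']
    congr 1
    rw [hβdef]; field_simp
  rw [hfx, hfy]
  rw [lapE_radial isOpen_Ioi hφ hφ₁ x (by simpa [← hS] using hSpos)]
  rw [lapE_radial hUyopen hψ hψ₁ y hTmem]
  simp only [hφ₁def, hφ₂def, hψ₁def, hψ₂def, ← hS, ← hT]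
  -- rewrite ‖x‖ ^ (2 * γ) = S ^ γ
  have hxγ : ‖x‖ ^ (2 * γ) = S ^ γ := by
    rw [hS, ← Real.rpow_natCast ‖x‖ 2, ← Real.rpow_mul (norm_nonneg x)]
    norm_num
  rw [hxγ, hbS]
  -- final algebra
  have hApos : 0 < S ^ (γ + 1) + k * T := hA S hSpos
  have e1 : S ^ γ = S ^ (γ - 1) * S := by
    have h := Real.rpow_add hSpos (γ - 1) 1
    rw [Real.rpow_one] at h
    simpa [show γ - 1 + 1 = γ by ring] using h
  have e2 : (S ^ (γ + 1) + k * T) ^ (β - 1)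
      = (S ^ (γ + 1) + k * T) ^ (β - 2) * (S ^ (γ + 1) + k * T) := by
    have h := Real.rpow_add hApos (β - 2) 1
    rw [Real.rpow_one] at h
    simpa [show β - 2 + 1 = β - 1 by ring] using h
  have e3 : S ^ (γ + 1) = S ^ (γ - 1) * S * S := by
    have h := Real.rpow_add hSpos γ 1
    rw [Real.rpow_one] at h
    rw [h, e1]
  have hβ' : 2 * (γ + 1) * β = 2 - ((m:ℝ) + (1 + γ) * l) := by
    rw [hβdef, hNdef]
    field_simp
  rw [e2, e1, e3]
  simp only [hkdef]
  linear_combination (2 * β * (γ + 1) * S ^ (γ - 1) * S *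
      ((S ^ (γ - 1) * S * S + (γ + 1) ^ 2 * T) ^ (β - 2)) *
      (S ^ (γ - 1) * S * S + (γ + 1) ^ 2 * T)) * hβ'
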